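/- Let P(z) = Σ_{j=0}^m A_j z^j be a matrix polynomial of degree m with A_m invertible. Suppose for some k ≥ 1, k‖A_m‖_F ≥ ‖A_{m-1}‖_F ≥ ... ≥ ‖A_1‖_F ≥ ‖A_0‖_F, and suppose there is a nonzero matrix C such that the angle between A_j and C (Frobenius inner product) is at most α ≤ π/2 for all j = 0,...,m. Then every eigenvalue z of P satisfies |z + k − 1| ≤ ‖A_m^{-1}‖_F · [ (k‖A_m‖_F − ‖A_0‖_F)(sin α + cos α) + ‖A_0‖_F + 2 sin α Σ_{j=0}^{m-1} ‖A_j‖_F ]. -/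

import Mathlib

/-- Frobenius norm of a complex matrix. -/
noncomputable def frobNorm {n : ℕ} (A : Matrix (Fin n) (Fin n) ℂ) : ℝ :=
  Real.sqrt (∑ i, ∑ j, ‖A i j‖ ^ 2)

set_option maxHeartbeats 1000000

open Finset Real Matrix

namespace SLaux

variable {n : ℕ}

noncomputable def emb (A : Matrix (Fin n) (Fin n) ℂ) :
    EuclideanSpace ℝ (Fin n × Fin n × Fin 2) :=
  (WithLp.equiv 2 _).symm fun p => ![(A p.1 p.2.1).re, (A p.1 p.2.1).im] p.2.2

lemma emb_apply (A : Matrix (Fin n) (Fin n) ℂ) (p : Fin n × Fin n × Fin 2) :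
    emb A p = ![(A p.1 p.2.1).re, (A p.1 p.2.1).im] p.2.2 := rfl

lemma frob_eq (A : Matrix (Fin n) (Fin n) ℂ) : frobNorm A = ‖emb A‖ := by
  rw [frobNorm, EuclideanSpace.norm_eq]
  congr 1
  rw [Fintype.sum_prod_type]
  refine Finset.sum_congr rfl fun i _ => ?_
  rw [Fintype.sum_prod_type]
  refine Finset.sum_congr rfl fun j _ => ?_
  rw [Fin.sum_univ_two]
  simp only [emb_apply, Real.norm_eq_abs, sq_abs, Complex.sq_norm,
    Complex.normSq_apply, Matrix.cons_val_zero, Matrix.cons_val_one, Matrix.head_cons]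
  ring

lemma emb_sub (A B : Matrix (Fin n) (Fin n) ℂ) : emb (A - B) = emb A - emb B := by
  ext p
  show _ = emb A p - emb B p
  obtain ⟨i, j, t⟩ := p
  fin_cases t <;> simp [emb_apply, Matrix.sub_apply]

lemma emb_real_smul (r : ℝ) (A : Matrix (Fin n) (Fin n) ℂ) :
    emb ((r : ℂ) • A) = r • emb A := by
  ext p
  show _ = r • emb A p
  obtain ⟨i, j, t⟩ := p
  fin_cases t <;>
    simp [emb_apply, Matrix.smul_apply, Complex.re_ofReal_mul, Complex.im_ofReal_mul]

lemma emb_ne_zero {A : Matrix (Fin n) (Fin n) ℂ} (h : A ≠ 0) : emb A ≠ 0 := by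
  intro h0
  apply h
  ext i j
  have h1 := congrArg (fun e => e (i, j, 0)) h0
  have h2 := congrArg (fun e => e (i, j, 1)) h0
  simp [emb_apply] at h1 h2
  simp [Complex.ext_iff, h1, h2]

lemma inner_emb (C A : Matrix (Fin n) (Fin n) ℂ) :
    (inner ℝ (emb C) (emb A) : ℝ) = (Matrix.trace (C.conjTranspose * A)).re := by
  have h1 : (inner ℝ (emb C) (emb A) : ℝ)
      = ∑ i, ∑ j, ((C i j).re * (A i j).re + (C i j).im * (A i j).im) := by
    rw [PiLp.inner_apply, Fintype.sum_prod_type]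
    refine Finset.sum_congr rfl fun i _ => ?_
    rw [Fintype.sum_prod_type]
    refine Finset.sum_congr rfl fun j _ => ?_
    rw [Fin.sum_univ_two]
    simp [emb_apply, RCLike.inner_apply, starRingEnd_apply, mul_comm]
  have h2 : (Matrix.trace (C.conjTranspose * A)).re
      = ∑ i, ∑ j, ((C j i).re * (A j i).re + (C j i).im * (A j i).im) := by
    rw [Matrix.trace]
    simp only [Matrix.diag_apply, Matrix.mul_apply, Matrix.conjTranspose_apply, Complex.re_sum]
    refine Finset.sum_congr rfl fun i _ => Finset.sum_congr rfl fun j _ => ?_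
    simp [Complex.mul_re]
  rw [h1, h2, Finset.sum_comm]


lemma le_of_sq_le_sq' {x y : ℝ} (h : x ^ 2 ≤ y ^ 2) (hy : 0 ≤ y) : x ≤ y := by
  nlinarith [abs_nonneg x, sq_abs x, le_abs_self x]

lemma cone {F : Type*} [NormedAddCommGroup F] [InnerProductSpace ℝ F]
    {α : ℝ} (hα0 : 0 ≤ α) (hα : α ≤ Real.pi / 2)
    {a b c : F} (hc : c ≠ 0) (hab : ‖a‖ ≤ ‖b‖)
    (ha : ‖a‖ * ‖c‖ * Real.cos α ≤ (inner ℝ a c : ℝ))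
    (hb : ‖b‖ * ‖c‖ * Real.cos α ≤ (inner ℝ b c : ℝ)) :
    ‖b - a‖ ≤ (‖b‖ - ‖a‖) * Real.cos α + (‖b‖ + ‖a‖) * Real.sin α := by
  have hcos : 0 ≤ Real.cos α :=
    Real.cos_nonneg_of_mem_Icc ⟨by linarith [Real.pi_pos], hα⟩
  have hsin : 0 ≤ Real.sin α :=
    Real.sin_nonneg_of_nonneg_of_le_pi hα0 (by linarith [Real.pi_pos])
  have hcpos : (0:ℝ) < ‖c‖ := norm_pos_iff.mpr hc
  have hc2 : (0:ℝ) < ‖c‖ ^ 2 := by positivity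
  set ta : ℝ := (inner ℝ a c : ℝ) / ‖c‖ ^ 2 with hta
  set tb : ℝ := (inner ℝ b c : ℝ) / ‖c‖ ^ 2 with htb
  have hany : (0:ℝ) ≤ ‖a‖ * ‖c‖ * Real.cos α := by positivity
  have hbny : (0:ℝ) ≤ ‖b‖ * ‖c‖ * Real.cos α := by positivity
  have hac0 : 0 ≤ (inner ℝ a c : ℝ) := le_trans hany ha
  have hbc0 : 0 ≤ (inner ℝ b c : ℝ) := le_trans hbny hb
  have hpyth : Real.sin α ^ 2 + Real.cos α ^ 2 = 1 := Real.sin_sq_add_cos_sq α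
  have hqa : (inner ℝ (a - ta • c) (b - tb • c) : ℝ)
      = (inner ℝ a b : ℝ) - (inner ℝ a c : ℝ) * (inner ℝ b c : ℝ) / ‖c‖ ^ 2 := by
    rw [inner_sub_left, inner_sub_right, inner_sub_right]
    rw [real_inner_smul_left, real_inner_smul_left, real_inner_smul_right,
      real_inner_smul_right, real_inner_self_eq_norm_sq]
    rw [hta, htb, real_inner_comm c b]
    field_simp
    ring
  have hna : ‖a - ta • c‖ ^ 2 = ‖a‖ ^ 2 - (inner ℝ a c : ℝ) ^ 2 / ‖c‖ ^ 2 := by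
    rw [norm_sub_sq_real, real_inner_smul_right, norm_smul, mul_pow,
      Real.norm_eq_abs, sq_abs, hta]
    field_simp
    ring
  have hnb : ‖b - tb • c‖ ^ 2 = ‖b‖ ^ 2 - (inner ℝ b c : ℝ) ^ 2 / ‖c‖ ^ 2 := by
    rw [norm_sub_sq_real, real_inner_smul_right, norm_smul, mul_pow,
      Real.norm_eq_abs, sq_abs, htb]
    field_simp
    ring
  have hqa_le : ‖a - ta • c‖ ≤ ‖a‖ * Real.sin α := by
    refine le_of_sq_le_sq' ?_ (by positivity)
    rw [hna]
    have h2 : (‖a‖ * ‖c‖ * Real.cos α) ^ 2 ≤ (inner ℝ a c : ℝ) ^ 2 :=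
      sq_le_sq' (by linarith) ha
    have h5 : ‖a‖ ^ 2 * Real.cos α ^ 2 ≤ (inner ℝ a c : ℝ) ^ 2 / ‖c‖ ^ 2 := by
      rw [le_div_iff₀ hc2]
      calc ‖a‖ ^ 2 * Real.cos α ^ 2 * ‖c‖ ^ 2 = (‖a‖ * ‖c‖ * Real.cos α) ^ 2 := by ring
        _ ≤ (inner ℝ a c : ℝ) ^ 2 := h2
    nlinarith [sq_nonneg ‖a‖]
  have hqb_le : ‖b - tb • c‖ ≤ ‖b‖ * Real.sin α := by
    refine le_of_sq_le_sq' ?_ (by positivity)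
    rw [hnb]
    have h2 : (‖b‖ * ‖c‖ * Real.cos α) ^ 2 ≤ (inner ℝ b c : ℝ) ^ 2 :=
      sq_le_sq' (by linarith) hb
    have h5 : ‖b‖ ^ 2 * Real.cos α ^ 2 ≤ (inner ℝ b c : ℝ) ^ 2 / ‖c‖ ^ 2 := by
      rw [le_div_iff₀ hc2]
      calc ‖b‖ ^ 2 * Real.cos α ^ 2 * ‖c‖ ^ 2 = (‖b‖ * ‖c‖ * Real.cos α) ^ 2 := by ring
        _ ≤ (inner ℝ b c : ℝ) ^ 2 := h2
    nlinarith [sq_nonneg ‖b‖]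
  have hkey : ‖a‖ * ‖b‖ * (Real.cos α ^ 2 - Real.sin α ^ 2) ≤ (inner ℝ a b : ℝ) := by
    have h1 : (inner ℝ a b : ℝ)
        = (inner ℝ a c : ℝ) * (inner ℝ b c : ℝ) / ‖c‖ ^ 2
          + (inner ℝ (a - ta • c) (b - tb • c) : ℝ) := by
      rw [hqa]; ring
    have hCS := abs_real_inner_le_norm (a - ta • c) (b - tb • c)
    have h4 : ‖a - ta • c‖ * ‖b - tb • c‖ ≤ ‖a‖ * Real.sin α * (‖b‖ * Real.sin α) :=
      mul_le_mul hqa_le hqb_le (norm_nonneg _) (by positivity)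
    have h3 : -(‖a‖ * Real.sin α * (‖b‖ * Real.sin α))
        ≤ (inner ℝ (a - ta • c) (b - tb • c) : ℝ) := by
      have := neg_abs_le (inner ℝ (a - ta • c) (b - tb • c) : ℝ)
      linarith
    have h5 : ‖a‖ * ‖b‖ * Real.cos α ^ 2 ≤ (inner ℝ a c : ℝ) * (inner ℝ b c : ℝ) / ‖c‖ ^ 2 := by
      rw [le_div_iff₀ hc2]
      calc ‖a‖ * ‖b‖ * Real.cos α ^ 2 * ‖c‖ ^ 2
          = (‖a‖ * ‖c‖ * Real.cos α) * (‖b‖ * ‖c‖ * Real.cos α) := by ring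
        _ ≤ (inner ℝ a c : ℝ) * (inner ℝ b c : ℝ) := mul_le_mul ha hb hbny hac0
    rw [h1]
    nlinarith
  have hdiff : ‖b - a‖ ^ 2 = ‖b‖ ^ 2 - 2 * (inner ℝ b a : ℝ) + ‖a‖ ^ 2 := norm_sub_sq_real b a
  refine le_of_sq_le_sq' ?_ ?_
  · rw [hdiff, real_inner_comm a b]
    have hE : ((‖b‖ - ‖a‖) * Real.cos α + (‖b‖ + ‖a‖) * Real.sin α) ^ 2
        = ‖b‖ ^ 2 + ‖a‖ ^ 2 - 2 * (‖a‖ * ‖b‖ * (Real.cos α ^ 2 - Real.sin α ^ 2))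
          + 2 * ((‖b‖ ^ 2 - ‖a‖ ^ 2) * (Real.sin α * Real.cos α)) := by
      linear_combination (‖b‖ ^ 2 + ‖a‖ ^ 2) * hpyth
    rw [hE]
    have hp : 0 ≤ (‖b‖ ^ 2 - ‖a‖ ^ 2) * (Real.sin α * Real.cos α) := by
      apply mul_nonneg _ (mul_nonneg hsin hcos)
      nlinarith [norm_nonneg a, norm_nonneg b]
    linarith
  · have := mul_nonneg (sub_nonneg.mpr hab) hcos
    have := mul_nonneg (add_nonneg (norm_nonneg b) (norm_nonneg a)) hsin
    linarith


noncomputable def vecE (x : Fin n → ℂ) : EuclideanSpace ℂ (Fin n) :=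
  (WithLp.equiv 2 _).symm x

lemma vecE_apply (x : Fin n → ℂ) (i : Fin n) : vecE x i = x i := rfl

lemma vecE_norm (x : Fin n → ℂ) : ‖vecE x‖ = Real.sqrt (∑ j, ‖x j‖ ^ 2) := by
  rw [EuclideanSpace.norm_eq]
  rfl

lemma vecE_add (x y : Fin n → ℂ) : vecE (x + y) = vecE x + vecE y := rfl

lemma vecE_smul (a : ℂ) (x : Fin n → ℂ) : vecE (a • x) = a • vecE x := rfl

lemma vecE_sum {ι : Type*} (s : Finset ι) (f : ι → (Fin n → ℂ)) :
    vecE (∑ i ∈ s, f i) = ∑ i ∈ s, vecE (f i) :=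
  map_sum (WithLp.linearEquiv 2 ℂ (Fin n → ℂ)).symm f s

lemma vecE_ne_zero {x : Fin n → ℂ} (h : x ≠ 0) : vecE x ≠ 0 := by
  intro h0
  exact h (funext fun i => congrArg (fun e => e i) h0)

lemma norm_mulVec_le (M : Matrix (Fin n) (Fin n) ℂ) (x : Fin n → ℂ) :
    ‖vecE (M *ᵥ x)‖ ≤ frobNorm M * ‖vecE x‖ := by
  rw [vecE_norm, vecE_norm, frobNorm, ← Real.sqrt_mul (by positivity)]
  apply Real.sqrt_le_sqrt
  have key : ∀ i, ‖(M *ᵥ x) i‖ ^ 2 ≤ (∑ j, ‖M i j‖ ^ 2) * ∑ j, ‖x j‖ ^ 2 := by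
    intro i
    have h1 : ‖(M *ᵥ x) i‖ ≤ ∑ j, ‖M i j‖ * ‖x j‖ := by
      calc ‖(M *ᵥ x) i‖ = ‖∑ j, M i j * x j‖ := rfl
        _ ≤ ∑ j, ‖M i j * x j‖ := norm_sum_le _ _
        _ = ∑ j, ‖M i j‖ * ‖x j‖ := by simp [norm_mul]
    calc ‖(M *ᵥ x) i‖ ^ 2 ≤ (∑ j, ‖M i j‖ * ‖x j‖) ^ 2 := by
          apply pow_le_pow_left₀ (norm_nonneg _) h1
      _ ≤ (∑ j, ‖M i j‖ ^ 2) * ∑ j, ‖x j‖ ^ 2 :=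
          Finset.sum_mul_sq_le_sq_mul_sq _ _ _
  calc ∑ i, ‖(M *ᵥ x) i‖ ^ 2 ≤ ∑ i, ((∑ j, ‖M i j‖ ^ 2) * ∑ j, ‖x j‖ ^ 2) :=
        Finset.sum_le_sum fun i _ => key i
    _ = (∑ i, ∑ j, ‖M i j‖ ^ 2) * ∑ j, ‖x j‖ ^ 2 := by rw [Finset.sum_mul]

lemma abel_id {V : Type*} [AddCommGroup V] [Module ℂ V] (z : ℂ) (v : ℕ → V) (M : ℕ) :
    (z - 1) • ∑ j ∈ Finset.range (M + 1), z ^ j • v j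
      = z ^ (M + 1) • v M - v 0 - ∑ j ∈ Finset.range M, z ^ (j + 1) • (v (j + 1) - v j) := by
  induction M with
  | zero => simp; module
  | succ M ih =>
    rw [Finset.sum_range_succ (f := fun j => z ^ j • v j), smul_add, ih,
      Finset.sum_range_succ]
    module

lemma key_id {V : Type*} [AddCommGroup V] [Module ℂ V] (z kc : ℂ) (v : ℕ → V) (M : ℕ)
    (hv : ∑ j ∈ Finset.range (M + 2), z ^ j • v j = 0) :
    ((z + kc - 1) * z ^ (M + 1)) • v (M + 1)
      = z ^ (M + 1) • (kc • v (M + 1) - v M)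
        + ∑ j ∈ Finset.range M, z ^ (j + 1) • (v (j + 1) - v j) + v 0 := by
  have h := abel_id z v (M + 1)
  rw [show M + 1 + 1 = M + 2 from rfl, hv, smul_zero, Finset.sum_range_succ] at h
  have h3 : z ^ (M + 2) • v (M + 1) - v 0
      = (∑ j ∈ Finset.range M, z ^ (j + 1) • (v (j + 1) - v j))
        + z ^ (M + 1) • (v (M + 1) - v M) := sub_eq_zero.mp h.symm
  have h4 : (∑ j ∈ Finset.range M, z ^ (j + 1) • (v (j + 1) - v j))
      = z ^ (M + 2) • v (M + 1) - v 0 - z ^ (M + 1) • (v (M + 1) - v M) :=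
    eq_sub_of_add_eq h3.symm
  rw [h4]
  module

lemma frob_nonneg (A : Matrix (Fin n) (Fin n) ℂ) : 0 ≤ frobNorm A := Real.sqrt_nonneg _

end SLaux


open SLaux in
/-- Theorem 2: if `k ≥ 1`, `k‖A_m‖_F ≥ ‖A_{m-1}‖_F ≥ ⋯ ≥ ‖A_0‖_F`, and all `A_j`
make an angle at most `α ≤ π/2` with some nonzero matrix `C` (w.r.t. the Frobenius
inner product), then every eigenvalue `z` of `P(z) = ∑_{j=0}^m A_j z^j` satisfies
`|z + k − 1| ≤ ‖A_m⁻¹‖_F [(k‖A_m‖_F − ‖A_0‖_F)(sin α + cos α) + ‖A_0‖_F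
  + 2 sin α ∑_{j=0}^{m-1} ‖A_j‖_F]`. -/
theorem matrixPoly_eigenvalue_bound_shah_liman {n : ℕ} (m : ℕ) (hm : 0 < m)
    (A : ℕ → Matrix (Fin n) (Fin n) ℂ) (hA : IsUnit (A m).det)
    (k : ℝ) (hk : 1 ≤ k)
    (htop : frobNorm (A (m - 1)) ≤ k * frobNorm (A m))
    (hchain : ∀ j, j + 1 < m → frobNorm (A j) ≤ frobNorm (A (j + 1)))
    (α : ℝ) (hα0 : 0 ≤ α) (hα : α ≤ Real.pi / 2)
    (C : Matrix (Fin n) (Fin n) ℂ) (hC : C ≠ 0)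
    (hangle : ∀ j ≤ m,
        frobNorm (A j) * frobNorm C * Real.cos α
          ≤ (Matrix.trace (C.conjTranspose * A j)).re)
    (z : ℂ)
    (hz : (∑ j ∈ Finset.range (m + 1), z ^ j • A j).det = 0) :
    ‖z + (k : ℂ) - 1‖
      ≤ frobNorm (A m)⁻¹
          * ((k * frobNorm (A m) - frobNorm (A 0)) * (Real.sin α + Real.cos α)
              + frobNorm (A 0)
              + 2 * Real.sin α * ∑ j ∈ Finset.range m, frobNorm (A j)) := by

  classical
  have hcos : 0 ≤ Real.cos α :=
    Real.cos_nonneg_of_mem_Icc ⟨by linarith [Real.pi_pos], hα⟩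
  have hsin : 0 ≤ Real.sin α :=
    Real.sin_nonneg_of_nonneg_of_le_pi hα0 (by linarith [Real.pi_pos])
  obtain ⟨M, rfl⟩ : ∃ M, m = M + 1 := ⟨m - 1, by omega⟩
  simp only [Nat.add_sub_cancel] at htop
  have hf0 : ∀ j : ℕ, 0 ≤ frobNorm (A j) := fun j => frob_nonneg _
  -- eigenvector
  obtain ⟨x, hx0, hxz⟩ := (Matrix.exists_mulVec_eq_zero_iff).mpr hz
  set v : ℕ → EuclideanSpace ℂ (Fin n) := fun j => vecE (A j *ᵥ x) with hv
  have hmv : ∀ (s : Finset ℕ) (B : ℕ → Matrix (Fin n) (Fin n) ℂ),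
      (∑ j ∈ s, B j) *ᵥ x = ∑ j ∈ s, (B j) *ᵥ x := by
    intro s B
    induction s using Finset.induction with
    | empty => simp
    | insert _ _ h ih => rw [Finset.sum_insert h, Finset.sum_insert h, Matrix.add_mulVec, ih]
  have hsum0 : ∑ j ∈ Finset.range (M + 2), z ^ j • v j = 0 := by
    have h1 : vecE ((∑ j ∈ Finset.range (M + 2), z ^ j • A j) *ᵥ x) = 0 := by
      rw [show M + 2 = M + 1 + 1 from rfl, hxz]; rfl
    rw [hmv, vecE_sum] at h1
    rw [← h1]
    refine Finset.sum_congr rfl fun j _ => ?_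
    rw [Matrix.smul_mulVec, vecE_smul]
  -- norms of eigenvector images
  have hxnorm : 0 < ‖vecE x‖ := norm_pos_iff.mpr (vecE_ne_zero hx0)
  have hinv : ‖vecE x‖ ≤ frobNorm (A (M + 1))⁻¹ * ‖v (M + 1)‖ := by
    have hxe : x = (A (M + 1))⁻¹ *ᵥ ((A (M + 1)) *ᵥ x) := by
      rw [Matrix.mulVec_mulVec, Matrix.nonsing_inv_mul _ hA, Matrix.one_mulVec]
    calc ‖vecE x‖ = ‖vecE ((A (M + 1))⁻¹ *ᵥ ((A (M + 1)) *ᵥ x))‖ := by rw [← hxe]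
      _ ≤ frobNorm (A (M + 1))⁻¹ * ‖v (M + 1)‖ := norm_mulVec_le _ _
  have hwpos : 0 < ‖v (M + 1)‖ := by
    rcases (norm_nonneg (v (M + 1))).lt_or_eq with h | h
    · exact h
    · exfalso
      rw [← h] at hinv
      nlinarith [frob_nonneg (A (M + 1))⁻¹]
  have hMinvpos : 0 < frobNorm (A (M + 1))⁻¹ := by
    rcases (frob_nonneg (A (M + 1))⁻¹).lt_or_eq with h | h
    · exact h
    · exfalso; rw [← h] at hinv; nlinarith
  have hone : 1 ≤ frobNorm (A (M + 1))⁻¹ * frobNorm (A (M + 1)) := by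
    have h2 := norm_mulVec_le (A (M + 1)) x
    have h3 := hinv.trans (mul_le_mul_of_nonneg_left h2 hMinvpos.le)
    nlinarith
  -- angle hypotheses in inner-product form
  have hangleE : ∀ j, j ≤ M + 1 →
      ‖emb (A j)‖ * ‖emb C‖ * Real.cos α ≤ (inner ℝ (emb (A j)) (emb C) : ℝ) := by
    intro j hj
    rw [real_inner_comm, inner_emb, ← frob_eq, ← frob_eq]
    exact hangle j hj
  have hCemb : emb C ≠ 0 := emb_ne_zero hC
  -- cone bounds
  have htopbound : frobNorm ((k : ℂ) • A (M + 1) - A M)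
      ≤ (k * frobNorm (A (M + 1)) - frobNorm (A M)) * Real.cos α
        + (k * frobNorm (A (M + 1)) + frobNorm (A M)) * Real.sin α := by
    have hkb : ‖(k : ℝ) • emb (A (M + 1))‖ = k * ‖emb (A (M + 1))‖ := by
      rw [norm_smul, Real.norm_eq_abs, abs_of_nonneg (by linarith)]
    have hco := cone (a := emb (A M)) (b := (k : ℝ) • emb (A (M + 1))) (c := emb C)
      hα0 hα hCemb
      (by rw [hkb, ← frob_eq, ← frob_eq]; exact htop)
      (hangleE M (by omega))
      (by
        rw [real_inner_smul_left, hkb]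
        calc k * ‖emb (A (M + 1))‖ * ‖emb C‖ * Real.cos α
            = k * (‖emb (A (M + 1))‖ * ‖emb C‖ * Real.cos α) := by ring
          _ ≤ k * (inner ℝ (emb (A (M + 1))) (emb C) : ℝ) :=
              mul_le_mul_of_nonneg_left (hangleE (M + 1) le_rfl) (by linarith))
    rw [hkb, ← frob_eq, ← frob_eq] at hco
    calc frobNorm ((k : ℂ) • A (M + 1) - A M)
        = ‖(k : ℝ) • emb (A (M + 1)) - emb (A M)‖ := by
          rw [frob_eq, emb_sub, emb_real_smul]
      _ ≤ _ := hco
  have hstep : ∀ j, j < M → frobNorm (A (j + 1) - A j)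
      ≤ (frobNorm (A (j + 1)) - frobNorm (A j)) * Real.cos α
        + (frobNorm (A (j + 1)) + frobNorm (A j)) * Real.sin α := by
    intro j hj
    have hco := cone (a := emb (A j)) (b := emb (A (j + 1))) (c := emb C) hα0 hα hCemb
      (by rw [← frob_eq, ← frob_eq]; exact hchain j (by omega))
      (hangleE j (by omega)) (hangleE (j + 1) (by omega))
    rw [← frob_eq, ← frob_eq] at hco
    calc frobNorm (A (j + 1) - A j) = ‖emb (A (j + 1)) - emb (A j)‖ := by
          rw [frob_eq, emb_sub]
      _ ≤ _ := hco
  -- total coefficient bound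
  set B : ℝ := frobNorm ((k : ℂ) • A (M + 1) - A M)
      + (∑ j ∈ Finset.range M, frobNorm (A (j + 1) - A j)) + frobNorm (A 0) with hB
  have hBnonneg : 0 ≤ B := by
    have h0 := frob_nonneg ((k : ℂ) • A (M + 1) - A M)
    have h1 : (0:ℝ) ≤ ∑ j ∈ Finset.range M, frobNorm (A (j + 1) - A j) :=
      Finset.sum_nonneg fun j _ => frob_nonneg _
    have h2 := hf0 0
    rw [hB]; linarith
  set bracket : ℝ := (k * frobNorm (A (M + 1)) - frobNorm (A 0)) * (Real.sin α + Real.cos α)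
      + frobNorm (A 0) + 2 * Real.sin α * ∑ j ∈ Finset.range (M + 1), frobNorm (A j)
      with hbracket
  have hBle : B ≤ bracket := by
    have hs1 : ∑ j ∈ Finset.range M, (frobNorm (A (j + 1)) - frobNorm (A j))
        = frobNorm (A M) - frobNorm (A 0) :=
      Finset.sum_range_sub (fun j => frobNorm (A j)) M
    have e1 : ∑ j ∈ Finset.range (M + 1), frobNorm (A j)
        = (∑ j ∈ Finset.range M, frobNorm (A (j + 1))) + frobNorm (A 0) :=
      Finset.sum_range_succ' (fun j => frobNorm (A j)) M
    have e2 : ∑ j ∈ Finset.range (M + 1), frobNorm (A j)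
        = (∑ j ∈ Finset.range M, frobNorm (A j)) + frobNorm (A M) :=
      Finset.sum_range_succ (fun j => frobNorm (A j)) M
    have hsum_le : ∑ j ∈ Finset.range M, frobNorm (A (j + 1) - A j)
        ≤ ∑ j ∈ Finset.range M,
            ((frobNorm (A (j + 1)) - frobNorm (A j)) * Real.cos α
              + (frobNorm (A (j + 1)) + frobNorm (A j)) * Real.sin α) :=
      Finset.sum_le_sum fun j hj => hstep j (Finset.mem_range.mp hj)
    have hSB : ∑ j ∈ Finset.range M,
          ((frobNorm (A (j + 1)) - frobNorm (A j)) * Real.cos α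
            + (frobNorm (A (j + 1)) + frobNorm (A j)) * Real.sin α)
        = (∑ j ∈ Finset.range M, (frobNorm (A (j + 1)) - frobNorm (A j))) * Real.cos α
          + ((∑ j ∈ Finset.range M, frobNorm (A (j + 1)))
              + ∑ j ∈ Finset.range M, frobNorm (A j)) * Real.sin α := by
      rw [Finset.sum_add_distrib, ← Finset.sum_mul, ← Finset.sum_mul, Finset.sum_add_distrib]
    rw [hSB, hs1] at hsum_le
    have hS1 : ∑ j ∈ Finset.range M, frobNorm (A (j + 1))
        = (∑ j ∈ Finset.range (M + 1), frobNorm (A j)) - frobNorm (A 0) := by linarith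
    have hS0 : ∑ j ∈ Finset.range M, frobNorm (A j)
        = (∑ j ∈ Finset.range (M + 1), frobNorm (A j)) - frobNorm (A M) := by linarith
    rw [hS1, hS0] at hsum_le
    rw [hB, hbracket]
    nlinarith [htopbound, hsum_le]
  -- case split on |z|
  rcases le_or_gt ‖z‖ 1 with hr | hr
  · -- small |z|
    have h1 : ‖z + (k : ℂ) - 1‖ ≤ k := by
      calc ‖z + (k : ℂ) - 1‖ = ‖z + ((k : ℂ) - 1)‖ := by ring_nf
        _ ≤ ‖z‖ + ‖(k : ℂ) - 1‖ := norm_add_le _ _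
        _ = ‖z‖ + (k - 1) := by
            rw [show ((k : ℂ) - 1) = ((k - 1 : ℝ) : ℂ) by push_cast; ring,
              Complex.norm_real, Real.norm_eq_abs, abs_of_nonneg (by linarith)]
        _ ≤ k := by linarith
    have hmono : ∀ j, j ≤ M → frobNorm (A 0) ≤ frobNorm (A j) := by
      intro j
      induction j with
      | zero => intro _; exact le_rfl
      | succ j ih => intro hj; exact le_trans (ih (by omega)) (hchain j (by omega))
    have hA0top : frobNorm (A 0) ≤ k * frobNorm (A (M + 1)) :=
      le_trans (hmono M le_rfl) htop
    have hsc1 : 1 ≤ Real.sin α + Real.cos α := by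
      nlinarith [Real.sin_sq_add_cos_sq α, Real.sin_le_one α, Real.cos_le_one α]
    have hSig : 0 ≤ ∑ j ∈ Finset.range (M + 1), frobNorm (A j) :=
      Finset.sum_nonneg fun j _ => hf0 j
    have hbk : k * frobNorm (A (M + 1)) ≤ bracket := by
      rw [hbracket]
      nlinarith [mul_nonneg (sub_nonneg.mpr hA0top)
          (by linarith : (0:ℝ) ≤ Real.sin α + Real.cos α - 1),
        mul_nonneg hsin hSig]
    calc ‖z + (k : ℂ) - 1‖ ≤ k := h1
      _ ≤ frobNorm (A (M + 1))⁻¹ * bracket := by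
          nlinarith [mul_le_mul_of_nonneg_left hbk hMinvpos.le,
            mul_le_mul_of_nonneg_left hone (by linarith : (0:ℝ) ≤ k)]
  · -- large |z|
    have key := key_id z (k : ℂ) v M hsum0
    set r : ℝ := ‖z‖ with hrdef
    have hr1 : (1:ℝ) ≤ r := hr.le
    have hrp : (0:ℝ) < r ^ (M + 1) := by positivity
    have hnormpow : ∀ j : ℕ, ‖z ^ j‖ = r ^ j := by
      intro j; rw [norm_pow]
    have h1 : ‖(k : ℂ) • v (M + 1) - v M‖
        ≤ frobNorm ((k : ℂ) • A (M + 1) - A M) * ‖vecE x‖ := by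
      have heq : (k : ℂ) • v (M + 1) - v M = vecE (((k : ℂ) • A (M + 1) - A M) *ᵥ x) := by
        rw [Matrix.sub_mulVec, Matrix.smul_mulVec]; rfl
      rw [heq]; exact norm_mulVec_le _ _
    have h2 : ∀ j, ‖v (j + 1) - v j‖ ≤ frobNorm (A (j + 1) - A j) * ‖vecE x‖ := by
      intro j
      have heq : v (j + 1) - v j = vecE ((A (j + 1) - A j) *ᵥ x) := by
        rw [Matrix.sub_mulVec]; rfl
      rw [heq]; exact norm_mulVec_le _ _
    have h3 : ‖v 0‖ ≤ frobNorm (A 0) * ‖vecE x‖ := norm_mulVec_le _ _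
    have big : ‖z + (k : ℂ) - 1‖ * r ^ (M + 1) * ‖v (M + 1)‖
        ≤ r ^ (M + 1) * (B * ‖vecE x‖) := by
      have hL : ‖z + (k : ℂ) - 1‖ * r ^ (M + 1) * ‖v (M + 1)‖
          = ‖((z + (k : ℂ) - 1) * z ^ (M + 1)) • v (M + 1)‖ := by
        rw [norm_smul, norm_mul, hnormpow]
      rw [hL, key]
      have hX : ‖z ^ (M + 1) • ((k : ℂ) • v (M + 1) - v M)‖
          ≤ r ^ (M + 1) * (frobNorm ((k : ℂ) • A (M + 1) - A M) * ‖vecE x‖) := by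
        rw [norm_smul, hnormpow]
        exact mul_le_mul_of_nonneg_left h1 (by positivity)
      have hY : ‖∑ j ∈ Finset.range M, z ^ (j + 1) • (v (j + 1) - v j)‖
          ≤ ∑ j ∈ Finset.range M, r ^ (M + 1) * (frobNorm (A (j + 1) - A j) * ‖vecE x‖) := by
        refine (norm_sum_le _ _).trans (Finset.sum_le_sum fun j hj => ?_)
        have hjM : j < M := Finset.mem_range.mp hj
        rw [norm_smul, hnormpow]
        have hrj : r ^ (j + 1) ≤ r ^ (M + 1) :=
          pow_le_pow_right₀ hr1 (by omega : j + 1 ≤ M + 1)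
        calc r ^ (j + 1) * ‖v (j + 1) - v j‖
            ≤ r ^ (j + 1) * (frobNorm (A (j + 1) - A j) * ‖vecE x‖) :=
              mul_le_mul_of_nonneg_left (h2 j) (by positivity)
          _ ≤ r ^ (M + 1) * (frobNorm (A (j + 1) - A j) * ‖vecE x‖) := by
              apply mul_le_mul_of_nonneg_right hrj
              exact mul_nonneg (frob_nonneg _) (norm_nonneg _)
      have hr0 : (1:ℝ) ≤ r ^ (M + 1) := by
        simpa using pow_le_pow_right₀ hr1 (Nat.zero_le (M + 1))
      have hW : ‖v 0‖ ≤ r ^ (M + 1) * (frobNorm (A 0) * ‖vecE x‖) := by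
        calc ‖v 0‖ ≤ frobNorm (A 0) * ‖vecE x‖ := h3
          _ ≤ r ^ (M + 1) * (frobNorm (A 0) * ‖vecE x‖) := by
              nlinarith [mul_nonneg (hf0 0) (norm_nonneg (vecE x))]
      calc ‖z ^ (M + 1) • ((k : ℂ) • v (M + 1) - v M)
            + ∑ j ∈ Finset.range M, z ^ (j + 1) • (v (j + 1) - v j) + v 0‖
          ≤ ‖z ^ (M + 1) • ((k : ℂ) • v (M + 1) - v M)‖
            + ‖∑ j ∈ Finset.range M, z ^ (j + 1) • (v (j + 1) - v j)‖ + ‖v 0‖ :=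
            norm_add₃_le
        _ ≤ r ^ (M + 1) * (frobNorm ((k : ℂ) • A (M + 1) - A M) * ‖vecE x‖)
            + (∑ j ∈ Finset.range M, r ^ (M + 1) * (frobNorm (A (j + 1) - A j) * ‖vecE x‖))
            + r ^ (M + 1) * (frobNorm (A 0) * ‖vecE x‖) := by
            exact add_le_add (add_le_add hX hY) hW
        _ = r ^ (M + 1) * (B * ‖vecE x‖) := by
            rw [hB, ← Finset.mul_sum, ← Finset.sum_mul]
            ring
    have big2 : ‖z + (k : ℂ) - 1‖ * (r ^ (M + 1) * ‖v (M + 1)‖)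
        ≤ (B * frobNorm (A (M + 1))⁻¹) * (r ^ (M + 1) * ‖v (M + 1)‖) := by
      have hstep2 : r ^ (M + 1) * (B * ‖vecE x‖)
          ≤ r ^ (M + 1) * (B * (frobNorm (A (M + 1))⁻¹ * ‖v (M + 1)‖)) := by
        apply mul_le_mul_of_nonneg_left _ hrp.le
        exact mul_le_mul_of_nonneg_left hinv hBnonneg
      calc ‖z + (k : ℂ) - 1‖ * (r ^ (M + 1) * ‖v (M + 1)‖)
          = ‖z + (k : ℂ) - 1‖ * r ^ (M + 1) * ‖v (M + 1)‖ := by ring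
        _ ≤ r ^ (M + 1) * (B * ‖vecE x‖) := big
        _ ≤ r ^ (M + 1) * (B * (frobNorm (A (M + 1))⁻¹ * ‖v (M + 1)‖)) := hstep2
        _ = (B * frobNorm (A (M + 1))⁻¹) * (r ^ (M + 1) * ‖v (M + 1)‖) := by ring
    have hfinal : ‖z + (k : ℂ) - 1‖ ≤ B * frobNorm (A (M + 1))⁻¹ :=
      le_of_mul_le_mul_right big2 (mul_pos hrp hwpos)
    calc ‖z + (k : ℂ) - 1‖ ≤ B * frobNorm (A (M + 1))⁻¹ := hfinal
      _ ≤ frobNorm (A (M + 1))⁻¹ * bracket := by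
          rw [mul_comm]
          exact mul_le_mul_of_nonneg_left hBle hMinvpos.le
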